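/- Let c₁₂, c₁₃, c₂₃ > 0, k ∈ ℝ, L > 0, λ₀ = (c₁₃ k)²/c₂₃ − 4π²c₁₂/L² > 0. Every C² solution w = (w₁,w₂,w₃) : [0,L] → ℝ³ of the system c₂₃ w₁″ + c₁₃ k w₃′ = 0, c₁₃ w₂″ − λ₀ w₂ = 0, c₁₂ w₃″ − c₁₃ k w₁′ − λ₀ w₃ = 0 with Dirichlet boundary conditions w(0) = w(L) = 0 is a scalar multiple of w*(t) = ( (c₁₃ k L)/(2 c₂₃ π)(1 − cos(2πt/L)), 0, −sin(2πt/L) ); i.e. the solution space is one-dimensional. -/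

import Mathlib

open Real

lemma const_on_Icc {f : ℝ → ℝ} {a b : ℝ} (hf : Differentiable ℝ f)
    (h : ∀ x ∈ Set.Icc a b, deriv f x = 0) : ∀ x ∈ Set.Icc a b, f x = f a := by
  intro x hx
  refine constant_of_has_deriv_right_zero hf.continuous.continuousOn (fun y hy => ?_) x hx
  have h1 : HasDerivAt f 0 y := by
    have := (hf y).hasDerivAt
    rwa [h y (Set.Ico_subset_Icc_self hy)] at this
  exact h1.hasDerivWithinAt

lemma deriv_diff (f : ℝ → ℝ) (h : ContDiff ℝ 2 f) : Differentiable ℝ (deriv f) := by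
  have h2 : ContDiff ℝ ((1:ℕ∞)+1) f := by exact_mod_cast h
  exact ((contDiff_succ_iff_deriv.mp h2).2.2).differentiable (by simp)

lemma hasDerivAt_cos_mul (μ t : ℝ) :
    HasDerivAt (fun t => Real.cos (μ*t)) (-(μ * Real.sin (μ*t))) t := by
  have := (Real.hasDerivAt_cos (μ*t)).comp t ((hasDerivAt_id t).const_mul μ)
  simpa [mul_comm, Function.comp_def] using this

lemma hasDerivAt_sin_mul (μ t : ℝ) :
    HasDerivAt (fun t => Real.sin (μ*t)) (μ * Real.cos (μ*t)) t := by
  have := (Real.hasDerivAt_sin (μ*t)).comp t ((hasDerivAt_id t).const_mul μ)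
  simpa [mul_comm, Function.comp_def] using this

lemma harmonic_ivp (μ L : ℝ) (hμ : μ ≠ 0) (v : ℝ → ℝ)
    (hd : Differentiable ℝ v) (hd' : Differentiable ℝ (deriv v))
    (heqv : ∀ t ∈ Set.Icc (0:ℝ) L, deriv (deriv v) t = -(μ^2) * v t)
    (h0 : v 0 = 0) (h0' : deriv v 0 = 0) : ∀ t ∈ Set.Icc (0:ℝ) L, v t = 0 := by
  set E : ℝ → ℝ := fun t => (deriv v t)^2 + μ^2 * (v t)^2 with hE
  have hEd : ∀ t, HasDerivAt E
      ((2:ℕ) * (deriv v t)^1 * deriv (deriv v) t + μ^2 * ((2:ℕ) * (v t)^1 * deriv v t)) t := by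
    intro t
    exact (((hd' t).hasDerivAt.pow 2)).add ((((hd t).hasDerivAt.pow 2)).const_mul (μ^2))
  have hEdiff : Differentiable ℝ E := fun t => (hEd t).differentiableAt
  have hEzero : ∀ t ∈ Set.Icc (0:ℝ) L, E t = 0 := by
    intro t ht
    have h1 : E t = E 0 := by
      refine const_on_Icc hEdiff (fun x hx => ?_) t ht
      rw [(hEd x).deriv, heqv x hx]; ring
    rw [h1]; simp [hE, h0, h0']
  intro t ht
  have h2 := hEzero t ht
  have h2' : (deriv v t)^2 + μ^2*(v t)^2 = 0 := h2
  have h3 : (v t)^2 = 0 := by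
    have hμ2 : 0 < μ^2 := by positivity
    nlinarith [sq_nonneg (deriv v t), sq_nonneg (v t)]
  exact sq_eq_zero_iff.mp h3

lemma harmonic_rep (μ L : ℝ) (hμ : μ ≠ 0) (u : ℝ → ℝ)
    (hd : Differentiable ℝ u) (hd' : Differentiable ℝ (deriv u))
    (hequ : ∀ t ∈ Set.Icc (0:ℝ) L, deriv (deriv u) t = -(μ^2) * u t) :
    ∀ t ∈ Set.Icc (0:ℝ) L,
      u t = u 0 * Real.cos (μ*t) + (deriv u 0 / μ) * Real.sin (μ*t) := by
  set A := u 0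
  set B := deriv u 0 / μ with hB
  set s : ℝ → ℝ := fun t => A * Real.cos (μ*t) + B * Real.sin (μ*t) with hs
  set s' : ℝ → ℝ := fun t => μ * (B * Real.cos (μ*t) - A * Real.sin (μ*t)) with hs'
  have hsd : ∀ t, HasDerivAt s (s' t) t := by
    intro t
    have := ((hasDerivAt_cos_mul μ t).const_mul A).add ((hasDerivAt_sin_mul μ t).const_mul B)
    refine this.congr_deriv ?_
    simp [hs']; ring
  have hsd' : ∀ t, HasDerivAt s' (-(μ^2) * s t) t := by
    intro t
    have := (((hasDerivAt_cos_mul μ t).const_mul B).sub ((hasDerivAt_sin_mul μ t).const_mul A)).const_mul μ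
    refine this.congr_deriv ?_
    simp [hs]; ring
  set v : ℝ → ℝ := fun t => u t - s t with hv
  have hvd : Differentiable ℝ v := hd.sub (fun t => (hsd t).differentiableAt)
  have hvderiv : deriv v = fun t => deriv u t - s' t := by
    funext t
    rw [hv]
    rw [deriv_fun_sub (hd t) (hsd t).differentiableAt, (hsd t).deriv]
  have hvd' : Differentiable ℝ (deriv v) := by
    rw [hvderiv]
    exact hd'.sub (fun t => (hsd' t).differentiableAt)
  have hv2 : ∀ t, deriv (deriv v) t = deriv (deriv u) t - (-(μ^2) * s t) := by
    intro t
    rw [hvderiv, deriv_fun_sub (hd' t) (hsd' t).differentiableAt, (hsd' t).deriv]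
  have hivp := harmonic_ivp μ L hμ v hvd hvd' (fun t ht => by
      rw [hv2 t, hequ t ht]; simp [hv]; ring)
    (by simp [hv, hs]; exact sub_self _) (by
      rw [hvderiv]; simp [hs', hB]; field_simp; ring)
  intro t ht
  have := hivp t ht
  simp only [hv, hs] at this
  linarith

lemma dirichlet_exp (ω L : ℝ) (hω : 0 < ω) (hL : 0 < L) (v : ℝ → ℝ)
    (hd : Differentiable ℝ v) (hd' : Differentiable ℝ (deriv v))
    (heqv : ∀ t ∈ Set.Icc (0:ℝ) L, deriv (deriv v) t = ω^2 * v t)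
    (h0 : v 0 = 0) (hLv : v L = 0) : ∀ t ∈ Set.Icc (0:ℝ) L, v t = 0 := by
  set C := deriv v 0 with hC
  have hexp : ∀ (c t : ℝ), HasDerivAt (fun t => Real.exp (c*t)) (c * Real.exp (c*t)) t := by
    intro c t
    have := (Real.hasDerivAt_exp (c*t)).comp t ((hasDerivAt_id t).const_mul c)
    simpa [mul_comm, Function.comp_def] using this
  set f : ℝ → ℝ := fun t => Real.exp (-ω*t) * (deriv v t + ω * v t) with hf
  have hfd : ∀ t, HasDerivAt f
      (-ω * Real.exp (-ω*t) * (deriv v t + ω * v t)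
        + Real.exp (-ω*t) * (deriv (deriv v) t + ω * deriv v t)) t := by
    intro t
    exact (hexp (-ω) t).mul (((hd' t).hasDerivAt).add (((hd t).hasDerivAt).const_mul ω))
  have hfconst : ∀ t ∈ Set.Icc (0:ℝ) L, f t = f 0 :=
    const_on_Icc (fun t => (hfd t).differentiableAt)
      (fun t ht => by rw [(hfd t).deriv, heqv t ht]; ring)
  have hf0 : f 0 = C := by simp [hf, h0, hC]
  set g : ℝ → ℝ := fun t => Real.exp (ω*t) * v t - (C/(2*ω)) * Real.exp (2*ω*t) with hg
  have hgd : ∀ t, HasDerivAt g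
      (ω * Real.exp (ω*t) * v t + Real.exp (ω*t) * deriv v t
        - (C/(2*ω)) * ((2*ω) * Real.exp (2*ω*t))) t := by
    intro t
    exact ((hexp ω t).mul (hd t).hasDerivAt).sub ((hexp (2*ω) t).const_mul (C/(2*ω)))
  have hgderiv : ∀ t ∈ Set.Icc (0:ℝ) L, deriv g t = 0 := by
    intro t ht
    have h1 : deriv v t + ω * v t = C * Real.exp (ω*t) := by
      have h2 := hfconst t ht
      rw [hf0] at h2
      simp only [hf] at h2
      have h4 : Real.exp (-ω*t) * Real.exp (ω*t) = 1 := by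
        rw [← Real.exp_add]; ring_nf; exact Real.exp_zero
      linear_combination Real.exp (ω*t) * h2 - (deriv v t + ω * v t) * h4
    rw [(hgd t).deriv]
    have h5 : Real.exp (ω*t) * Real.exp (ω*t) = Real.exp (2*ω*t) := by
      rw [← Real.exp_add]; ring_nf
    have h6 : C / (2*ω) * (2*ω*Real.exp (2*ω*t)) = C * Real.exp (2*ω*t) := by
      have : (2*ω) ≠ 0 := by positivity
      field_simp
    rw [h6]
    linear_combination Real.exp (ω*t) * h1 + C * h5
  have hgconst : ∀ t ∈ Set.Icc (0:ℝ) L, g t = g 0 :=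
    const_on_Icc (fun t => (hgd t).differentiableAt) hgderiv
  have hCzero : C = 0 := by
    have h6 := hgconst L ⟨le_of_lt hL, le_refl L⟩
    simp only [hg, hLv, h0] at h6
    have h7 : (1:ℝ) < Real.exp (2*ω*L) := by
      rw [← Real.exp_zero]
      exact Real.exp_lt_exp.mpr (by positivity)
    have hω' : ω ≠ 0 := ne_of_gt hω
    have h8 : C/(2*ω) * Real.exp (2*ω*L) = C/(2*ω) := by
      simpa using h6
    have h9 : C/(2*ω) * (Real.exp (2*ω*L) - 1) = 0 := by linarith [h8]
    have h10 : C/(2*ω) = 0 := by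
      rcases mul_eq_zero.mp h9 with h | h
      · exact h
      · linarith
    field_simp at h10
    simpa using h10
  intro t ht
  have h11 := hgconst t ht
  have h12 : Real.exp (ω*t) * v t = 0 := by
    simpa [hg, hCzero, h0] using h11
  exact (mul_eq_zero.mp h12).resolve_left (Real.exp_ne_zero _)

theorem kernel_one_dimensional
    (c₁₂ c₁₃ c₂₃ k L : ℝ) (h12 : 0 < c₁₂) (h13 : 0 < c₁₃) (h23 : 0 < c₂₃)
    (hk : k ≠ 0) (hL : 0 < L)
    (lam0 : ℝ) (hlam : lam0 = (c₁₃ * k)^2 / c₂₃ - 4 * π^2 * c₁₂ / L^2)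
    (hpos : 0 < lam0)
    (w₁ w₂ w₃ : ℝ → ℝ)
    (hC₁ : ContDiff ℝ 2 w₁) (hC₂ : ContDiff ℝ 2 w₂) (hC₃ : ContDiff ℝ 2 w₃)
    (hbc0 : w₁ 0 = 0 ∧ w₂ 0 = 0 ∧ w₃ 0 = 0)
    (hbcL : w₁ L = 0 ∧ w₂ L = 0 ∧ w₃ L = 0)
    (heq : ∀ t ∈ Set.Icc (0:ℝ) L,
      c₂₃ * deriv (deriv w₁) t + c₁₃ * k * deriv w₃ t = 0 ∧
      c₁₃ * deriv (deriv w₂) t - lam0 * w₂ t = 0 ∧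
      c₁₂ * deriv (deriv w₃) t - c₁₃ * k * deriv w₁ t - lam0 * w₃ t = 0) :
    ∃ c : ℝ, ∀ t ∈ Set.Icc (0:ℝ) L,
      w₁ t = c * ((c₁₃ * k * L) / (2 * c₂₃ * π) * (1 - cos (2 * π * t / L))) ∧
      w₂ t = 0 ∧
      w₃ t = c * (-sin (2 * π * t / L)) := by
  obtain ⟨hb10, hb20, hb30⟩ := hbc0
  obtain ⟨hb1L, hb2L, hb3L⟩ := hbcL
  have hπ : (0:ℝ) < π := Real.pi_pos
  have hLne : L ≠ 0 := ne_of_gt hL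
  have hc23 : c₂₃ ≠ 0 := ne_of_gt h23
  have hc12 : c₁₂ ≠ 0 := ne_of_gt h12
  have hd1 : Differentiable ℝ w₁ := hC₁.differentiable (by norm_num)
  have hd2 : Differentiable ℝ w₂ := hC₂.differentiable (by norm_num)
  have hd3 : Differentiable ℝ w₃ := hC₃.differentiable (by norm_num)
  have hd1' : Differentiable ℝ (deriv w₁) := deriv_diff w₁ hC₁
  have hd2' : Differentiable ℝ (deriv w₂) := deriv_diff w₂ hC₂
  have hd3' : Differentiable ℝ (deriv w₃) := deriv_diff w₃ hC₃
  set μ : ℝ := 2*π/L with hμdef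
  have hμpos : 0 < μ := by positivity
  have hμ : μ ≠ 0 := ne_of_gt hμpos
  have hμL : μ * L = 2*π := by rw [hμdef]; field_simp
  have hcosL : Real.cos (μ*L) = 1 := by rw [hμL]; exact Real.cos_two_pi
  have hsinL : Real.sin (μ*L) = 0 := by rw [hμL]; exact Real.sin_two_pi
  -- w₂ ≡ 0
  have hω2pos : 0 < lam0 / c₁₃ := div_pos hpos h13
  have hωpos : 0 < Real.sqrt (lam0/c₁₃) := Real.sqrt_pos.mpr hω2pos
  have hωsq : (Real.sqrt (lam0/c₁₃))^2 = lam0/c₁₃ := Real.sq_sqrt (le_of_lt hω2pos)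
  have hw2 : ∀ t ∈ Set.Icc (0:ℝ) L, w₂ t = 0 := by
    refine dirichlet_exp _ L hωpos hL w₂ hd2 hd2' (fun t ht => ?_) hb20 hb2L
    have h := (heq t ht).2.1
    rw [hωsq]
    have hc13 : c₁₃ ≠ 0 := ne_of_gt h13
    field_simp
    linear_combination h
  -- first integral: c₂₃ w₁' + c₁₃ k w₃ = A
  set A : ℝ := c₂₃ * deriv w₁ 0 with hA
  have hF : ∀ t : ℝ, HasDerivAt (fun t => c₂₃ * deriv w₁ t + c₁₃*k*w₃ t)
      (c₂₃ * deriv (deriv w₁) t + c₁₃*k*deriv w₃ t) t := fun t =>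
    (((hd1' t).hasDerivAt).const_mul c₂₃).add (((hd3 t).hasDerivAt).const_mul (c₁₃*k))
  have hFconst : ∀ t ∈ Set.Icc (0:ℝ) L, c₂₃ * deriv w₁ t + c₁₃*k*w₃ t = A := by
    intro t ht
    have h := const_on_Icc (f := fun t => c₂₃ * deriv w₁ t + c₁₃*k*w₃ t)
      (fun t => (hF t).differentiableAt)
      (fun x hx => by rw [(hF x).deriv]; exact (heq x hx).1) t ht
    rw [hA]
    simpa [hb30] using h
  -- key algebraic identity
  have hkey' : (c₁₃*k)^2 = c₂₃*(lam0 + c₁₂*μ^2) := by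
    rw [hlam, hμdef]
    field_simp
    ring
  set Cc : ℝ := c₁₃*k*A/(c₂₃*c₁₂*μ^2) with hCc
  have h12' : μ^2*Cc*(c₂₃*c₁₂) = c₁₃*k*A := by
    rw [hCc]; field_simp
  -- w₃ satisfies shifted harmonic equation
  have hw3'' : ∀ t ∈ Set.Icc (0:ℝ) L, deriv (deriv w₃) t = -(μ^2) * (w₃ t - Cc) := by
    intro t ht
    have hG : c₂₃*c₁₂*(deriv (deriv w₃) t) = -(μ^2)*c₂₃*c₁₂*(w₃ t) + c₁₃*k*A := by
      linear_combination c₂₃*(heq t ht).2.2 + c₁₃*k*(hFconst t ht) - (w₃ t)*hkey'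
    have hne : (c₂₃*c₁₂) ≠ 0 := mul_ne_zero hc23 hc12
    apply mul_left_cancel₀ hne
    linear_combination hG - h12'
  -- representation of w₃
  have hderivu : deriv (fun t => w₃ t - Cc) = deriv w₃ := by
    funext x
    exact deriv_sub_const Cc
  have hud' : Differentiable ℝ (deriv fun t => w₃ t - Cc) := by
    rw [hderivu]; exact hd3'
  have hrep := harmonic_rep μ L hμ (fun t => w₃ t - Cc) (hd3.sub_const Cc) hud'
    (fun t ht => by
      have : deriv (deriv fun t => w₃ t - Cc) = deriv (deriv w₃) := by rw [hderivu]
      rw [this, hw3'' t ht])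
  set b : ℝ := deriv w₃ 0 / μ with hb
  have hw3rep : ∀ t ∈ Set.Icc (0:ℝ) L,
      w₃ t = Cc - Cc*Real.cos (μ*t) + b*Real.sin (μ*t) := by
    intro t ht
    have h := hrep t ht
    simp only [hderivu, hb30] at h
    rw [hb]
    linear_combination h
  -- second integral for w₁
  set G₁ : ℝ → ℝ := fun t => c₂₃ * w₁ t
    - ((A - c₁₃*k*Cc)*t + (c₁₃*k*Cc/μ)*Real.sin (μ*t) + (c₁₃*k*b/μ)*Real.cos (μ*t)) with hG₁
  have hG1d : ∀ t, HasDerivAt G₁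
      (c₂₃ * deriv w₁ t - ((A - c₁₃*k*Cc) + c₁₃*k*Cc*Real.cos (μ*t)
        - c₁₃*k*b*Real.sin (μ*t))) t := by
    intro t
    have h1 : HasDerivAt (fun t : ℝ => (A - c₁₃*k*Cc)*t) (A - c₁₃*k*Cc) t := by
      simpa using (hasDerivAt_id t).const_mul (A - c₁₃*k*Cc)
    have h2 := (hasDerivAt_sin_mul μ t).const_mul (c₁₃*k*Cc/μ)
    have h3 := (hasDerivAt_cos_mul μ t).const_mul (c₁₃*k*b/μ)
    have h4 := ((hd1 t).hasDerivAt.const_mul c₂₃).sub ((h1.add h2).add h3)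
    refine h4.congr_deriv ?_
    field_simp
    ring
  have hG1const : ∀ t ∈ Set.Icc (0:ℝ) L, G₁ t = G₁ 0 := by
    refine const_on_Icc (fun t => (hG1d t).differentiableAt) (fun x hx => ?_)
    rw [(hG1d x).deriv]
    linear_combination hFconst x hx - c₁₃*k*(hw3rep x hx)
  -- boundary condition at L gives A = c₁₃ k Cc
  have hArel : A = c₁₃*k*Cc := by
    have h9 := hG1const L ⟨le_of_lt hL, le_refl L⟩
    simp only [hG₁, hb1L, hb10, hcosL, hsinL, mul_zero, zero_mul, Real.sin_zero,
      Real.cos_zero, mul_one, add_zero, zero_add, zero_sub, sub_zero] at h9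
    have h10 : (A - c₁₃*k*Cc) * L = 0 := by linarith
    rcases mul_eq_zero.mp h10 with h | h
    · linarith
    · exact absurd h hLne
  -- A = 0 and Cc = 0
  have hCc0 : Cc = 0 := by
    have h13' : Cc * (c₂₃ * lam0) = 0 := by
      linear_combination -(c₁₃*k*hArel) - Cc*hkey' - h12'
    rcases mul_eq_zero.mp h13' with h | h
    · exact h
    · exact absurd h (ne_of_gt (mul_pos h23 hpos))
  have hA0 : A = 0 := by rw [hArel, hCc0]; ring
  -- final formulas
  have hw3fin : ∀ t ∈ Set.Icc (0:ℝ) L, w₃ t = b * Real.sin (μ*t) := by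
    intro t ht
    rw [hw3rep t ht, hCc0]; ring
  have hw1fin : ∀ t ∈ Set.Icc (0:ℝ) L,
      c₂₃ * w₁ t = c₁₃*k*b/μ*Real.cos (μ*t) - c₁₃*k*b/μ := by
    intro t ht
    have h14 := hG1const t ht
    simp only [hG₁, hA0, hCc0, hb10, mul_zero, zero_mul, Real.sin_zero, Real.cos_zero,
      mul_one, add_zero, zero_add, zero_sub, sub_zero, zero_div] at h14
    linarith
  have harg : ∀ t : ℝ, 2 * π * t / L = μ*t := fun t => by rw [hμdef]; ring
  have hcoef : (c₁₃ * k * L) / (2 * c₂₃ * π) = c₁₃*k/(c₂₃*μ) := by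
    rw [hμdef]; field_simp
  clear_value μ A Cc b
  refine ⟨-b, fun t ht => ⟨?_, hw2 t ht, ?_⟩⟩
  · rw [harg t, hcoef]
    have h15 := hw1fin t ht
    field_simp
    linear_combination μ * h15 + c₁₃*k*b*(Real.cos (μ*t) - 1)*(mul_inv_cancel₀ hμ)
  · rw [harg t, hw3fin t ht]
    ring
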